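/- Let f ∈ H²(𝔻) and let (z_j)_{j≥1} be a sequence of distinct points of 𝔻 that is a uniqueness set of H²(𝔻), i.e. every g ∈ H²(𝔻) with g(z_j) = 0 for all j ≥ 1 is identically zero. Then for every n the Gram matrix A_n with entries a_{j,k} = 1/(1 − z̄_k z_j) (1 ≤ j, k ≤ n) is positive definite, and the functions f*_{A_n}(z) = Σ_{j=1}^n Σ_{k=1}^n f(z_j) ã_{j,k} K_S(z, z̄_k), where ã_{j,k} are the entries of the conjugate of A_n^{-1}, converge to f in the norm of H²(𝔻) as n → ∞. -/

import Mathlib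

open scoped ComplexOrder

/-- Taylor coefficient of a function `f : ℂ → ℂ` at the origin. -/
noncomputable def hcoeff (f : ℂ → ℂ) (n : ℕ) : ℂ :=
  iteratedDeriv n f 0 / (n.factorial : ℂ)

/-- The squared Hardy space `H²(𝔻)` norm, computed through Taylor coefficients:
`‖f‖² = ∑ |aₙ|²`. -/
noncomputable def hnormSq (f : ℂ → ℂ) : ℝ :=
  ∑' n : ℕ, ‖hcoeff f n‖ ^ 2

/-- Membership in the Hardy space `H²(𝔻)`: `f` is the sum of its Taylor series on the open
unit disc and its Taylor coefficients are square-summable. -/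
def MemHardy (f : ℂ → ℂ) : Prop :=
  (∀ z ∈ Metric.ball (0 : ℂ) 1, HasSum (fun n => hcoeff f n * z ^ n) (f z)) ∧
    Summable fun n => ‖hcoeff f n‖ ^ 2

/-- The Szegő kernel `K_S(·, w̄) : z ↦ 1/(1 − w̄ z)`. -/
noncomputable def szego (w : ℂ) : ℂ → ℂ := fun z => (1 - (starRingEnd ℂ) w * z)⁻¹

open scoped ENNReal NNReal Matrix

local notation "⟪" x ", " y "⟫" => @inner ℂ _ _ x y

section AveiroAux

lemma hcoeff_of_hasSum {g : ℂ → ℂ} {a : ℕ → ℂ}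
    (hg : ∀ w ∈ Metric.ball (0:ℂ) 1, HasSum (fun n => a n * w ^ n) (g w)) (n : ℕ) :
    hcoeff g n = a n := by
  set p := FormalMultilinearSeries.ofScalars ℂ a with hp
  have hpn : ∀ m (y : ℂ), p m (fun _ => y) = a m * y ^ m := by
    intro m y
    rw [hp, FormalMultilinearSeries.ofScalars_apply_eq, smul_eq_mul]
  have hrad : 1 ≤ p.radius := by
    refine ENNReal.le_of_forall_nnreal_lt (fun r hr => ?_)
    have hr1 : ((r : ℝ) : ℂ) ∈ Metric.ball (0:ℂ) 1 := by
      simp only [Metric.mem_ball, dist_zero_right, Complex.norm_real, Real.norm_eq_abs,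
        abs_of_nonneg r.coe_nonneg]
      exact_mod_cast hr
    have hs := (hg _ hr1).summable.norm
    refine p.le_radius_of_summable ?_
    refine hs.congr fun m => ?_
    rw [norm_mul, norm_pow, Complex.norm_real, Real.norm_eq_abs, abs_of_nonneg r.coe_nonneg,
      FormalMultilinearSeries.ofScalars_norm]
  have hball : HasFPowerSeriesOnBall g p 0 1 :=
    { r_le := hrad
      r_pos := one_pos
      hasSum := by
        intro y hy
        have hy' : y ∈ Metric.ball (0:ℂ) 1 := by
          rw [EMetric.mem_ball, edist_zero_right] at hy
          rw [Metric.mem_ball, dist_zero_right]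
          rw [enorm_eq_nnnorm] at hy
          exact_mod_cast hy
        simp only [hpn, zero_add]
        exact hg y hy' }
  have h1 := hball.factorial_smul (1:ℂ) n
  rw [hpn] at h1
  have h2 : iteratedDeriv n g 0 = (n.factorial : ℂ) * a n := by
    rw [iteratedDeriv_eq_iteratedFDeriv, ← h1]
    simp [nsmul_eq_mul]
  rw [hcoeff, h2, mul_comm, mul_div_assoc, div_self (by exact_mod_cast n.factorial_ne_zero),
    mul_one]

noncomputable abbrev Hsp := lp (fun _ : ℕ => ℂ) 2

lemma rpow_toReal_two (t : ℝ) : t ^ (2 : ℝ≥0∞).toReal = t ^ 2 := by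
  rw [ENNReal.toReal_ofNat, show (2:ℝ) = ((2:ℕ):ℝ) by norm_num, Real.rpow_natCast]

lemma memlp2 {x : ℕ → ℂ} (h : Summable fun n => ‖x n‖ ^ 2) : Memℓp x 2 := by
  apply memℓp_gen
  exact h.congr fun n => (rpow_toReal_two _).symm

lemma hsp_normSq (x : Hsp) : ‖x‖ ^ 2 = ∑' n, ‖x n‖ ^ 2 := by
  have h := lp.norm_rpow_eq_tsum (p := 2) (by norm_num) x
  rw [rpow_toReal_two] at h
  rw [h]
  exact tsum_congr fun n => rpow_toReal_two _

lemma hsp_summableSq (x : Hsp) : Summable fun n => ‖x n‖ ^ 2 := by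
  have h := (lp.memℓp x).summable (p := 2) (by norm_num)
  exact h.congr fun n => rpow_toReal_two _

lemma hsp_inner (x y : Hsp) : ⟪x, y⟫ = ∑' n, (starRingEnd ℂ) (x n) * y n := by
  rw [lp.inner_eq_tsum]
  exact tsum_congr fun n => RCLike.inner_apply' _ _

lemma kern_summable {w : ℂ} (hw : ‖w‖ < 1) :
    Summable fun m : ℕ => ‖((starRingEnd ℂ) w) ^ m‖ ^ 2 := by
  have h : ∀ m : ℕ, ‖((starRingEnd ℂ) w) ^ m‖ ^ 2 = (‖w‖ ^ 2) ^ m := by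
    intro m
    rw [norm_pow, Complex.norm_conj, ← pow_mul, ← pow_mul, mul_comm]
  refine (summable_geometric_of_lt_one (by positivity) ?_).congr fun m => (h m).symm
  nlinarith [norm_nonneg w]

/-- The Szegő kernel vector at `w`, as an element of `ℓ²`. -/
noncomputable def kern (w : ℂ) (hw : ‖w‖ < 1) : Hsp :=
  ⟨fun m => ((starRingEnd ℂ) w) ^ m, memlp2 (kern_summable hw)⟩

lemma kern_apply (w : ℂ) (hw : ‖w‖ < 1) (m : ℕ) :
    (kern w hw : ℕ → ℂ) m = ((starRingEnd ℂ) w) ^ m := rfl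

lemma kern_inner {w : ℂ} (hw : ‖w‖ < 1) (x : Hsp) :
    ⟪kern w hw, x⟫ = ∑' m, w ^ m * x m := by
  rw [hsp_inner]
  exact tsum_congr fun m => by rw [kern_apply, map_pow, Complex.conj_conj]

lemma kern_inner_kern {u w : ℂ} (hu : ‖u‖ < 1) (hw : ‖w‖ < 1) :
    ⟪kern u hu, kern w hw⟫ = (1 - u * (starRingEnd ℂ) w)⁻¹ := by
  rw [kern_inner]
  have h : ∀ m : ℕ, u ^ m * (kern w hw : ℕ → ℂ) m = (u * (starRingEnd ℂ) w) ^ m := by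
    intro m; rw [kern_apply, mul_pow]
  rw [tsum_congr h]
  refine tsum_geometric_of_norm_lt_one ?_
  rw [norm_mul, Complex.norm_conj]
  nlinarith [norm_nonneg u, norm_nonneg w]

end AveiroAux

set_option maxHeartbeats 1000000

/-- **Aveiro approximation in `H²(𝔻)` over a uniqueness set (Theorem 3.1).**
Let `f ∈ H²(𝔻)` and let `(z j)` be a sequence of distinct points of `𝔻` forming a uniqueness
set of `H²(𝔻)`. Then every Gram matrix `A n` (entries `1/(1 − conj (z k) z j)`) is positive
definite and the Aveiro approximations
`f*_{A n}(w) = ∑_{j,k} f (z j) ã_{j,k} K_S(w, conj (z k))` converge to `f` in the `H²`-norm. -/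
theorem stmt10 (f : ℂ → ℂ) (hf : MemHardy f)
    (z : ℕ → ℂ) (hz : ∀ j, ‖z j‖ < 1) (hinj : Function.Injective z)
    (huniq : ∀ g : ℂ → ℂ, MemHardy g → (∀ j, g (z j) = 0) →
      ∀ w ∈ Metric.ball (0 : ℂ) 1, g w = 0)
    (A : (n : ℕ) → Matrix (Fin n) (Fin n) ℂ)
    (hA : ∀ n (j k : Fin n), A n j k = (1 - (starRingEnd ℂ) (z k) * z j)⁻¹) :
    (∀ n, (A n).PosDef) ∧
    Filter.Tendsto
      (fun n : ℕ => hnormSq (fun w =>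
        f w - ∑ j : Fin n, ∑ k : Fin n,
          f (z j) * (starRingEnd ℂ) ((A n)⁻¹ j k) * szego (z k) w))
      Filter.atTop (nhds 0) := by
  classical
  have hball : ∀ j, z j ∈ Metric.ball (0:ℂ) 1 := by
    intro j
    rw [Metric.mem_ball, dist_zero_right]
    exact hz j
  set K : ℕ → Hsp := fun j => kern (z j) (hz j) with hK
  have hKapp : ∀ (j : ℕ) (m : ℕ), (K j : ℕ → ℂ) m = ((starRingEnd ℂ) (z j)) ^ m :=
    fun j m => rfl
  have hGram : ∀ n (j k : Fin n), ⟪K j, K k⟫ = A n j k := by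
    intro n j k
    rw [hK, kern_inner_kern, hA, mul_comm]
  have haf : Memℓp (hcoeff f) 2 := memlp2 hf.2
  set af : Hsp := ⟨hcoeff f, haf⟩ with hafdef
  have hafK : ∀ j : ℕ, ⟪K j, af⟫ = f (z j) := by
    intro j
    rw [hK, kern_inner]
    have h := hf.1 (z j) (hball j)
    rw [← h.tsum_eq]
    exact tsum_congr fun m => mul_comm _ _
  -- nontriviality of combinations of kernels
  have hlin : ∀ n (x : Fin n → ℂ), x ≠ 0 → (∑ j : Fin n, x j • K j) ≠ 0 := by
    intro n x hx h0
    apply hx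
    have hco : ∀ m : ℕ, ∑ j : Fin n, x j * ((starRingEnd ℂ) (z j)) ^ m = 0 := by
      intro m
      have h1 := congrFun (congrArg (fun v : Hsp => (v : ℕ → ℂ)) h0) m
      simp only [lp.coeFn_sum, Finset.sum_apply, lp.coeFn_smul, Pi.smul_apply, smul_eq_mul,
        lp.coeFn_zero, Pi.zero_apply] at h1
      rw [← h1]
      exact Finset.sum_congr rfl fun j _ => by rw [hKapp]
    set d : Fin n → ℂ := fun j => (starRingEnd ℂ) (z j) with hd
    have hdinj : Function.Injective d := by
      intro i j h
      exact Fin.val_injective (hinj ((starRingEnd ℂ).injective h))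
    have hB : ((Matrix.vandermonde d)ᵀ).mulVec x = 0 := by
      funext i
      have := hco (i : ℕ)
      simp only [Matrix.mulVec, dotProduct, Matrix.transpose_apply, Matrix.vandermonde,
        Matrix.of_apply, Pi.zero_apply]
      rw [← this]
      exact Finset.sum_congr rfl fun j _ => mul_comm _ _
    have hdet : ((Matrix.vandermonde d)ᵀ).det ≠ 0 := by
      rw [Matrix.det_transpose, Matrix.det_vandermonde]
      refine Finset.prod_ne_zero_iff.mpr fun i _ => Finset.prod_ne_zero_iff.mpr fun j hj => ?_
      exact sub_ne_zero.mpr fun hdd => (Finset.mem_Ioi.mp hj).ne' (hdinj hdd)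
    exact Matrix.eq_zero_of_mulVec_eq_zero hdet hB
  -- positive definiteness
  have hPos : ∀ n, (A n).PosDef := by
    intro n
    refine Matrix.PosDef.of_dotProduct_mulVec_pos ?_ ?_
    · show (A n)ᴴ = A n
      ext j k
      rw [Matrix.conjTranspose_apply, hA, hA]
      simp only [star_inv₀, star_sub, star_one, star_mul', Complex.star_def, Complex.conj_conj]
      rw [mul_comm]
    · intro x hx
      set u : Hsp := ∑ j : Fin n, x j • K j with hu
      have hips : dotProduct (star x) ((A n) *ᵥ x) = ⟪u, u⟫ := by
        rw [hu, sum_inner]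
        simp only [inner_sum, inner_smul_left, inner_smul_right, hGram]
        simp only [dotProduct, Matrix.mulVec, Pi.star_apply, Complex.star_def]
        apply Finset.sum_congr rfl
        intro k _
        rw [Finset.mul_sum]
        apply Finset.sum_congr rfl
        intro l _
        ring
      rw [hips, inner_self_eq_norm_sq_to_K]
      have hpos : (0:ℝ) < ‖u‖ ^ 2 := pow_pos (norm_pos_iff.mpr (hlin n x hx)) 2
      rw [← RCLike.ofReal_pow]
      exact RCLike.ofReal_pos.mpr hpos
  refine ⟨hPos, ?_⟩
  have hdet : ∀ n, IsUnit (A n).det := fun n => (hPos n).det_pos.ne'.isUnit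
  set U : ℕ → Submodule ℂ Hsp := fun n => Submodule.span ℂ (Set.range fun j : Fin n => K j)
    with hU
  have hUmono : Monotone U := by
    intro m n hmn
    apply Submodule.span_mono
    rintro _ ⟨j, rfl⟩
    exact ⟨Fin.castLE hmn j, rfl⟩
  haveI hUfd : ∀ n, FiniteDimensional ℂ (U n) := fun n =>
    FiniteDimensional.span_of_finite ℂ (Set.finite_range _)
  -- density of the union of the spans
  have horthbot : (⨆ n, U n)ᗮ = ⊥ := by
    rw [Submodule.eq_bot_iff]
    intro y hy
    have hyK : ∀ j : ℕ, ⟪K j, y⟫ = 0 := by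
      intro j
      refine (Submodule.mem_orthogonal _ y).mp hy (K j) ?_
      exact Submodule.mem_iSup_of_mem (j+1)
        (Submodule.subset_span ⟨⟨j, Nat.lt_succ_self j⟩, rfl⟩)
    have hysq := hsp_summableSq y
    have hsum : ∀ w ∈ Metric.ball (0:ℂ) 1, Summable fun m : ℕ => (y : ℕ → ℂ) m * w ^ m := by
      intro w hw
      rw [Metric.mem_ball, dist_zero_right] at hw
      have hgeo : Summable fun m : ℕ => (‖w‖ ^ 2) ^ m :=
        summable_geometric_of_lt_one (by positivity) (by nlinarith [norm_nonneg w])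
      refine Summable.of_norm ?_
      refine Summable.of_nonneg_of_le (fun m => norm_nonneg _) (fun m => ?_)
        ((hysq.add hgeo).div_const 2)
      rw [norm_mul, norm_pow]
      have h1 : (‖w‖ ^ m) ^ 2 = (‖w‖ ^ 2) ^ m := by rw [← pow_mul, ← pow_mul, mul_comm]
      nlinarith [sq_nonneg (‖(y : ℕ → ℂ) m‖ - ‖w‖ ^ m)]
    set g : ℂ → ℂ := fun w => ∑' m, (y : ℕ → ℂ) m * w ^ m with hgdef
    have hgsum : ∀ w ∈ Metric.ball (0:ℂ) 1, HasSum (fun m => (y : ℕ → ℂ) m * w ^ m) (g w) :=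
      fun w hw => (hsum w hw).hasSum
    have hgco : ∀ m, hcoeff g m = (y : ℕ → ℂ) m := hcoeff_of_hasSum hgsum
    have hgH : MemHardy g := by
      constructor
      · intro w hw
        simpa only [hgco] using hgsum w hw
      · simpa only [hgco] using hysq
    have hgz : ∀ j, g (z j) = 0 := by
      intro j
      have h1 : g (z j) = ⟪K j, y⟫ := by
        rw [hK, kern_inner]
        exact tsum_congr fun m => mul_comm _ _
      rw [h1, hyK j]
    have hg0 := huniq g hgH hgz
    refine lp.ext (funext fun m => ?_)
    have h0 : hcoeff g m = 0 :=
      hcoeff_of_hasSum (a := fun _ => (0:ℂ))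
        (fun w hw => by rw [hg0 w hw]; simpa using hasSum_zero) m
    have := (hgco m).symm.trans h0
    simpa using this
  have hdense : ⊤ ≤ (⨆ n, U n).topologicalClosure := by
    have h := Submodule.orthogonal_orthogonal_eq_closure (K := ⨆ n, U n)
    rw [horthbot, Submodule.bot_orthogonal_eq_top] at h
    rw [h]
  -- the approximant as an element of ℓ²
  set c : (n : ℕ) → Fin n → Fin n → ℂ :=
    fun n j k => f (z j) * (starRingEnd ℂ) ((A n)⁻¹ j k) with hc
  set v : ℕ → Hsp := fun n => ∑ j : Fin n, ∑ k : Fin n, c n j k • K k with hv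
  have hvU : ∀ n, v n ∈ U n :=
    fun n => Submodule.sum_mem _ fun j _ => Submodule.sum_mem _ fun k _ =>
      Submodule.smul_mem _ _ (Submodule.subset_span ⟨k, rfl⟩)
  have hAinv : ∀ n (j k : Fin n), (starRingEnd ℂ) ((A n)⁻¹ j k) = (A n)⁻¹ k j := by
    intro n j k
    have h := (hPos n).1.inv
    conv_rhs => rw [← h]
    rw [Matrix.conjTranspose_apply]
    rfl
  have hKv : ∀ n (j' : Fin n), ⟪K j', v n⟫ = f (z j') := by
    intro n j'
    rw [hv]
    simp only [inner_sum, inner_smul_right]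
    have h2 : ∀ j : Fin n, ∑ k : Fin n, c n j k * ⟪K (j':ℕ), K (k:ℕ)⟫
        = f (z j) * (1 : Matrix (Fin n) (Fin n) ℂ) j' j := by
      intro j
      have he : ∀ k : Fin n, c n j k * ⟪K (j':ℕ), K (k:ℕ)⟫
          = f (z j) * (A n j' k * (A n)⁻¹ k j) := by
        intro k
        simp only [hGram n j' k, hc]
        rw [hAinv n j k]
        ring
      rw [Finset.sum_congr rfl fun k _ => he k, ← Finset.mul_sum, ← Matrix.mul_apply,
        Matrix.mul_nonsing_inv _ (hdet n)]
    rw [Finset.sum_congr rfl fun j _ => h2 j]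
    simp [Matrix.one_apply]
  have hproj : ∀ n, (U n).starProjection af = v n := by
    intro n
    refine Submodule.eq_starProjection_of_mem_of_inner_eq_zero (hvU n) ?_
    intro w hw
    induction hw using Submodule.span_induction with
    | mem x h =>
      obtain ⟨j', rfl⟩ := h
      have h1 : ⟪K (j':ℕ), af - v n⟫ = 0 := by
        rw [inner_sub_right, hafK, hKv, sub_self]
      rw [← inner_conj_symm, h1, map_zero]
    | zero => exact inner_zero_right _
    | add x y hx hy ihx ihy => rw [inner_add_right, ihx, ihy, add_zero]
    | smul a x hx ih => rw [inner_smul_right, ih, mul_zero]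
  have htend := Submodule.starProjection_tendsto_self U hUmono af hdense
  have hvt : Filter.Tendsto v Filter.atTop (nhds af) := htend.congr fun n => hproj n
  -- coefficients of the approximants
  have hvm : ∀ n m, (v n : ℕ → ℂ) m
      = ∑ j : Fin n, ∑ k : Fin n, c n j k * ((starRingEnd ℂ) (z k)) ^ m := by
    intro n m
    rw [hv]
    simp only [lp.coeFn_sum, Finset.sum_apply, lp.coeFn_smul, Pi.smul_apply, smul_eq_mul]
    exact Finset.sum_congr rfl fun j _ => Finset.sum_congr rfl fun k _ => by rw [hKapp]
  have hFco : ∀ n, hnormSq (fun w => f w - ∑ j : Fin n, ∑ k : Fin n,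
      f (z j) * (starRingEnd ℂ) ((A n)⁻¹ j k) * szego (z k) w) = ‖af - v n‖ ^ 2 := by
    intro n
    have hco : ∀ m, hcoeff (fun w => f w - ∑ j : Fin n, ∑ k : Fin n,
        f (z j) * (starRingEnd ℂ) ((A n)⁻¹ j k) * szego (z k) w) m
        = ((af - v n : Hsp) : ℕ → ℂ) m := by
      refine hcoeff_of_hasSum ?_
      intro w hw
      have hw1 : ‖w‖ < 1 := by rwa [Metric.mem_ball, dist_zero_right] at hw
      have h1 := hf.1 w hw
      have h2 : ∀ (j k : Fin n), HasSum
          (fun m : ℕ => c n j k * ((starRingEnd ℂ) (z (k:ℕ))) ^ m * w ^ m)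
          (c n j k * szego (z (k:ℕ)) w) := by
        intro j k
        have hnorm : ‖(starRingEnd ℂ) (z (k:ℕ)) * w‖ < 1 := by
          rw [norm_mul, RCLike.norm_conj]
          nlinarith [norm_nonneg (z (k:ℕ)), norm_nonneg w,
            hz (k:ℕ)]
        have hg := (hasSum_geometric_of_norm_lt_one hnorm).mul_left (c n j k)
        have heq : (fun m : ℕ => c n j k * ((starRingEnd ℂ) (z (k:ℕ)) * w) ^ m)
            = fun m : ℕ => c n j k * ((starRingEnd ℂ) (z (k:ℕ))) ^ m * w ^ m := by
          funext m
          rw [mul_pow]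
          ring
        have : szego (z (k:ℕ)) w = (1 - (starRingEnd ℂ) (z (k:ℕ)) * w)⁻¹ := rfl
        rw [this]
        exact heq ▸ hg
      have h3 : HasSum
          (fun m : ℕ => ∑ j : Fin n, ∑ k : Fin n,
            c n j k * ((starRingEnd ℂ) (z (k:ℕ))) ^ m * w ^ m)
          (∑ j : Fin n, ∑ k : Fin n, c n j k * szego (z (k:ℕ)) w) :=
        hasSum_sum fun j _ => hasSum_sum fun k _ => h2 j k
      have h4 := h1.sub h3
      have hfun : (fun m : ℕ => (((af - v n : Hsp)) : ℕ → ℂ) m * w ^ m)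
          = fun m : ℕ => hcoeff f m * w ^ m - ∑ j : Fin n, ∑ k : Fin n,
            c n j k * ((starRingEnd ℂ) (z (k:ℕ))) ^ m * w ^ m := by
        funext m
        rw [lp.coeFn_sub, Pi.sub_apply, hvm n m, sub_mul, Finset.sum_mul]
        have : ((af : ℕ → ℂ)) m = hcoeff f m := rfl
        rw [this]
        congr 1
        exact Finset.sum_congr rfl fun j _ => Finset.sum_mul _ _ _
      have hval : (∑ j : Fin n, ∑ k : Fin n,
          f (z (j:ℕ)) * (starRingEnd ℂ) ((A n)⁻¹ j k) * szego (z (k:ℕ)) w)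
          = ∑ j : Fin n, ∑ k : Fin n, c n j k * szego (z (k:ℕ)) w := by
        simp only [hc]
      rw [hfun, hval]
      exact h4
    rw [show hnormSq (fun w => f w - ∑ j : Fin n, ∑ k : Fin n,
        f (z j) * (starRingEnd ℂ) ((A n)⁻¹ j k) * szego (z k) w)
        = ∑' m : ℕ, ‖hcoeff (fun w => f w - ∑ j : Fin n, ∑ k : Fin n,
            f (z j) * (starRingEnd ℂ) ((A n)⁻¹ j k) * szego (z k) w) m‖ ^ 2 from rfl]
    rw [tsum_congr fun m => by rw [hco m]]
    exact (hsp_normSq _).symm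
  have h5 : Filter.Tendsto (fun n => ‖af - v n‖ ^ 2) Filter.atTop (nhds 0) := by
    have hd : Filter.Tendsto (fun n => af - v n) Filter.atTop (nhds 0) := by
      have := tendsto_const_nhds (x := af) (f := (Filter.atTop : Filter ℕ)) |>.sub hvt
      simpa using this
    have hn : Filter.Tendsto (fun n => ‖af - v n‖) Filter.atTop (nhds 0) := by
      have := (continuous_norm.tendsto (0 : Hsp)).comp hd
      simpa [Function.comp_def] using this
    have := hn.pow 2
    simpa using this
  exact h5.congr fun n => (hFco n).symm
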